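/- Let p be a prime and A an abelian group. Suppose there exists an integer M such that |A/nA| ≤ M for every positive integer n coprime to p. Then A is isomorphic to F ⊕ D where F is a finite group of order coprime to p and D is p'-divisible (D/nD = 0 for all n coprime to p). -/

import Mathlib

/-- The additive homomorphism `a ↦ n • a` on an abelian group. -/
def nMul (A : Type*) [AddCommGroup A] (n : ℕ) : A →+ A :=
  AddMonoidHom.mk' (fun a => n • a) (fun a b => smul_add n a b)

/-- The subgroup of elements of finite order coprime to `p` ("p'-torsion"). -/
def pPrimeTorsion (A : Type*) [AddCommGroup A] (p : ℕ) : AddSubgroup A where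
  carrier := {a : A | ∃ n : ℕ, 0 < n ∧ Nat.Coprime n p ∧ n • a = 0}
  zero_mem' := ⟨1, Nat.one_pos, Nat.coprime_one_left p, smul_zero 1⟩
  add_mem' := by
    rintro a b ⟨n, hn, hcn, ha⟩ ⟨m, hm, hcm, hb⟩
    refine ⟨n * m, Nat.mul_pos hn hm, Nat.Coprime.mul hcn hcm, ?_⟩
    have h1 : (n * m) • a = 0 := by rw [mul_comm, mul_smul, ha, smul_zero]
    have h2 : (n * m) • b = 0 := by rw [mul_smul, hb, smul_zero]
    rw [smul_add, h1, h2, add_zero]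
  neg_mem' := by
    rintro a ⟨n, hn, hcn, ha⟩
    exact ⟨n, hn, hcn, by rw [smul_neg, ha, neg_zero]⟩

/-- If `|A/nA| ≤ M` uniformly for all positive `n` coprime to `p`, then `A` is an
(internal) direct sum `F ⊕ D` with `F` finite of order coprime to `p` and `D` p'-divisible. -/
theorem stmt3 (p : ℕ) (hp : p.Prime) (A : Type*) [AddCommGroup A] (M : ℕ)
    (hbd : ∀ n : ℕ, 0 < n → Nat.Coprime n p →
      Finite (A ⧸ (nMul A n).range) ∧ Nat.card (A ⧸ (nMul A n).range) ≤ M) :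
    ∃ F D : AddSubgroup A, IsCompl F D ∧ Finite F ∧ (Nat.card F).Coprime p ∧
      ∀ n : ℕ, 0 < n → Nat.Coprime n p → ∀ d ∈ D, ∃ e ∈ D, n • e = d := by
  classical
  set R : ℕ → AddSubgroup A := fun n => (nMul A n).range with hRdef
  have hmemR : ∀ (n : ℕ) (a : A), n • a ∈ R n := fun n a => ⟨a, rfl⟩
  -- choose n₀ maximizing the index
  set S : Set ℕ := {c | ∃ n : ℕ, 0 < n ∧ Nat.Coprime n p ∧ Nat.card (A ⧸ R n) = c} with hSdef
  have hSne : S.Nonempty := ⟨_, 1, Nat.one_pos, Nat.coprime_one_left p, rfl⟩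
  have hSbdd : ∀ c ∈ S, c ≤ M := by
    rintro c ⟨n, hn, hcn, rfl⟩
    exact (hbd n hn hcn).2
  obtain ⟨n₀, hn₀pos, hn₀cop, hn₀card⟩ :=
    Nat.sSup_mem hSne ⟨M, hSbdd⟩
  set D : AddSubgroup A := R n₀ with hDdef
  have hmax : ∀ n : ℕ, 0 < n → Nat.Coprime n p →
      Nat.card (A ⧸ R n) ≤ Nat.card (A ⧸ D) := by
    intro n hn hcn
    rw [hn₀card]
    exact le_csSup ⟨M, hSbdd⟩ ⟨n, hn, hcn, rfl⟩
  haveI hDfin : Finite (A ⧸ D) := (hbd n₀ hn₀pos hn₀cop).1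
  -- key: R (n * n₀) = D for n coprime to p
  have hkey : ∀ n : ℕ, 0 < n → Nat.Coprime n p → R (n * n₀) = D := by
    intro n hn hcn
    have hnn₀ : 0 < n * n₀ := Nat.mul_pos hn hn₀pos
    have hcnn₀ : Nat.Coprime (n * n₀) p := Nat.Coprime.mul hcn hn₀cop
    haveI := (hbd (n * n₀) hnn₀ hcnn₀).1
    have hle : R (n * n₀) ≤ D := by
      rintro x ⟨a, rfl⟩
      refine ⟨n • a, ?_⟩
      show n₀ • (n • a) = (n * n₀) • a
      rw [← mul_smul, mul_comm]
    have hD0 : D.index ≠ 0 := by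
      rw [AddSubgroup.index_eq_card]; exact Nat.card_pos.ne'
    have hH0 : (R (n * n₀)).index ≠ 0 := by
      rw [AddSubgroup.index_eq_card]; exact Nat.card_pos.ne'
    have h1 : (R (n * n₀)).relIndex D * D.index = (R (n * n₀)).index :=
      AddSubgroup.relIndex_mul_index hle
    have h2 : (R (n * n₀)).index ≤ D.index := by
      rw [AddSubgroup.index_eq_card, AddSubgroup.index_eq_card]
      exact hmax (n * n₀) hnn₀ hcnn₀
    have hrel1 : (R (n * n₀)).relIndex D ≤ 1 := by
      have : (R (n * n₀)).relIndex D * D.index ≤ 1 * D.index := by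
        rw [h1, one_mul]; exact h2
      exact Nat.le_of_mul_le_mul_right this (Nat.pos_of_ne_zero hD0)
    have hrel0 : (R (n * n₀)).relIndex D ≠ 0 := by
      intro h; rw [h, zero_mul] at h1; exact hH0 h1.symm
    have hrel : (R (n * n₀)).relIndex D = 1 :=
      le_antisymm hrel1 (Nat.pos_of_ne_zero hrel0)
    exact le_antisymm hle (AddSubgroup.relIndex_eq_one.mp hrel)
  -- p'-divisibility of D
  have hDdiv : ∀ n : ℕ, 0 < n → Nat.Coprime n p → ∀ d ∈ D, ∃ e ∈ D, n • e = d := by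
    intro n hn hcn d hd
    rw [← hkey n hn hcn] at hd
    obtain ⟨a, rfl⟩ := hd
    refine ⟨n₀ • a, hmemR n₀ a, ?_⟩
    show n • n₀ • a = (n * n₀) • a
    rw [mul_smul]
  set m : ℕ := Nat.card (A ⧸ D) with hmdef
  have hm0 : 0 < m := Nat.card_pos
  have hmD : ∀ a : A, m • a ∈ D := by
    intro a
    have h : m • ((a : A ⧸ D)) = 0 := card_nsmul_eq_zero'
    rwa [← QuotientAddGroup.mk_nsmul, QuotientAddGroup.eq_zero_iff] at h
  -- m is coprime to p
  have hmp : m.Coprime p := by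
    by_contra h
    have hpm : p ∣ m := by
      by_contra h2
      exact h (Nat.coprime_comm.mp (hp.coprime_iff_not_dvd.mpr h2))
    haveI : Fact p.Prime := ⟨hp⟩
    obtain ⟨g, hg⟩ := exists_prime_addOrderOf_dvd_card' (G := A ⧸ D) p hpm
    obtain ⟨a, rfl⟩ := QuotientAddGroup.mk_surjective g
    have hn₀g : n₀ • ((a : A ⧸ D)) = 0 := by
      rw [← QuotientAddGroup.mk_nsmul, QuotientAddGroup.eq_zero_iff]
      exact hmemR n₀ a
    have hdvd : p ∣ n₀ := hg ▸ addOrderOf_dvd_of_nsmul_eq_zero hn₀g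
    have : Nat.Coprime p p := Nat.Coprime.coprime_dvd_left hdvd hn₀cop
    rw [Nat.Coprime, Nat.gcd_self] at this
    exact hp.one_lt.ne' this
  -- Zorn: maximal F disjoint from D
  obtain ⟨F, hFmax⟩ := zorn_le₀ {F : AddSubgroup A | Disjoint F D} (by
    intro c hc hchain
    rcases c.eq_empty_or_nonempty with rfl | hcne
    · exact ⟨⊥, disjoint_bot_left, fun z hz => absurd hz (Set.notMem_empty z)⟩
    · refine ⟨sSup c, ?_, fun z hz => le_sSup hz⟩
      show Disjoint (sSup c) D
      rw [AddSubgroup.disjoint_def]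
      intro x hx hxD
      rw [AddSubgroup.mem_sSup_of_directedOn hcne hchain.directedOn] at hx
      obtain ⟨H, hH, hxH⟩ := hx
      exact (AddSubgroup.disjoint_def.mp (hc hH)) hxH hxD)
  have hFD : Disjoint F D := hFmax.prop
  -- F ⊔ D = ⊤
  have htop : F ⊔ D = ⊤ := by
    by_contra h
    have : ∃ a : A, a ∉ F ⊔ D := by
      by_contra h2; push_neg at h2
      exact h ((AddSubgroup.eq_top_iff' (F ⊔ D)).mpr h2)
    obtain ⟨a, ha⟩ := this
    set T : AddSubgroup ℤ := (F ⊔ D).comap (zmultiplesHom A a) with hTdef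
    have hTmem : ∀ t : ℤ, t ∈ T ↔ t • a ∈ F ⊔ D := fun t => Iff.rfl
    obtain ⟨g, hg⟩ := Int.subgroup_cyclic T
    have hmemT : ∀ t : ℤ, t ∈ T ↔ ∃ s : ℤ, s • g = t := by
      intro t; rw [hg]; exact AddSubgroup.mem_closure_singleton
    have hmT : (m : ℤ) ∈ T := by
      rw [hTmem]
      have : (m : ℤ) • a = m • a := natCast_zsmul a m
      rw [this]
      exact AddSubgroup.mem_sup_right (hmD a)
    have hgdvd : ∀ t : ℤ, t ∈ T → g ∣ t := by
      intro t ht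
      obtain ⟨s, rfl⟩ := (hmemT t).mp ht
      exact ⟨s, by simp [zsmul_eq_mul, mul_comm]⟩
    have hg0 : g ≠ 0 := by
      rintro rfl
      obtain ⟨s, hs⟩ := (hmemT m).mp hmT
      rw [smul_zero] at hs
      exact_mod_cast hm0.ne' (by exact_mod_cast hs.symm)
    set k : ℕ := g.natAbs with hkdef
    have hk0 : 0 < k := Int.natAbs_pos.mpr hg0
    have hkT : (k : ℤ) ∈ T := by
      rcases Int.natAbs_eq g with h' | h'
      · rw [hg, ← h']; exact AddSubgroup.mem_closure_singleton.mpr ⟨1, one_smul _ _⟩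
      · rw [hg]
        refine AddSubgroup.mem_closure_singleton.mpr ⟨-1, ?_⟩
        rw [neg_one_zsmul, h', neg_neg]
    have hkm : k ∣ m := by
      have : g ∣ (m : ℤ) := hgdvd m hmT
      have h2 : (k : ℤ) ∣ (m : ℤ) := (Int.natAbs_dvd).mpr this
      exact_mod_cast h2
    have hkp : k.Coprime p := Nat.Coprime.coprime_dvd_left hkm hmp
    -- decompose k • a
    have hka : k • a ∈ F ⊔ D := by
      have := (hTmem k).mp hkT
      rwa [natCast_zsmul] at this
    obtain ⟨f, hf, d, hd, hfd⟩ := AddSubgroup.mem_sup.mp hka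
    obtain ⟨d', hd', hkd'⟩ := hDdiv k hk0 hkp d hd
    set b : A := a - d' with hbdef
    have hkb : k • b = f := by
      rw [hbdef, smul_sub, hkd', ← hfd, add_sub_cancel_right]
    have hbnot : b ∉ F ⊔ D := by
      intro hb
      apply ha
      have : a = b + d' := by rw [hbdef, sub_add_cancel]
      rw [this]
      exact AddSubgroup.add_mem _ hb (AddSubgroup.mem_sup_right hd')
    have hbF : b ∉ F := fun hbF => hbnot (AddSubgroup.mem_sup_left hbF)
    -- the bigger disjoint subgroup
    have hdisj' : Disjoint (F ⊔ AddSubgroup.closure {b}) D := by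
      rw [AddSubgroup.disjoint_def]
      intro x hx hxD
      obtain ⟨f₁, hf₁, y, hy, hfy⟩ := AddSubgroup.mem_sup.mp hx
      obtain ⟨t, rfl⟩ := AddSubgroup.mem_closure_singleton.mp hy
      have htb : t • b ∈ F ⊔ D := by
        have : t • b = x - f₁ := by rw [← hfy, add_sub_cancel_left]
        rw [this]
        exact AddSubgroup.sub_mem _ (AddSubgroup.mem_sup_right hxD)
          (AddSubgroup.mem_sup_left hf₁)
      have hta : t ∈ T := by
        rw [hTmem]
        have : t • a = t • b + t • d' := by
          rw [hbdef, smul_sub, sub_add_cancel]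
        rw [this]
        exact AddSubgroup.add_mem _ htb
          (AddSubgroup.mem_sup_right (AddSubgroup.zsmul_mem _ hd' t))
      have hkt : (k : ℤ) ∣ t := (Int.natAbs_dvd).mpr (hgdvd t hta)
      obtain ⟨s, rfl⟩ := hkt
      have htbF : ((k : ℤ) * s) • b ∈ F := by
        rw [mul_comm, mul_smul, natCast_zsmul, hkb]
        exact AddSubgroup.zsmul_mem _ hf s
      have hxF : x ∈ F := by
        rw [← hfy]
        exact AddSubgroup.add_mem _ hf₁ htbF
      exact (AddSubgroup.disjoint_def.mp hFD) hxF hxD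
    have hle : F ⊔ AddSubgroup.closure {b} ≤ F := hFmax.2 hdisj' le_sup_left
    exact hbF (hle (le_sup_right (α := AddSubgroup A)
      (AddSubgroup.subset_closure (Set.mem_singleton b))))
  -- conclude
  have hcompl : IsCompl F D := ⟨hFD, codisjoint_iff.mpr htop⟩
  -- F is isomorphic to A ⧸ D
  set φ : F → A ⧸ D := fun f => QuotientAddGroup.mk (f : A) with hφdef
  have hinj : Function.Injective φ := by
    intro f₁ f₂ hf
    have : (f₁ : A) - (f₂ : A) ∈ D := by
      rwa [← QuotientAddGroup.eq_iff_sub_mem]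
    have hF : (f₁ : A) - (f₂ : A) ∈ F := AddSubgroup.sub_mem _ f₁.2 f₂.2
    have := (AddSubgroup.disjoint_def.mp hFD) hF this
    exact Subtype.ext (sub_eq_zero.mp this)
  have hsurj : Function.Surjective φ := by
    intro x
    obtain ⟨a, rfl⟩ := QuotientAddGroup.mk_surjective x
    have : a ∈ F ⊔ D := htop ▸ AddSubgroup.mem_top a
    obtain ⟨f, hf, d, hd, hfd⟩ := AddSubgroup.mem_sup.mp this
    refine ⟨⟨f, hf⟩, ?_⟩
    show QuotientAddGroup.mk f = QuotientAddGroup.mk a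
    rw [QuotientAddGroup.eq_iff_sub_mem]
    have : f - a = -d := by rw [← hfd]; abel
    rw [this]
    exact AddSubgroup.neg_mem _ hd
  haveI hFfin : Finite F := Finite.of_injective φ hinj
  have hcard : Nat.card F = m := Nat.card_eq_of_bijective φ ⟨hinj, hsurj⟩
  exact ⟨F, D, hcompl, hFfin, hcard ▸ hmp, hDdiv⟩
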